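/- In the infinite dihedral group D∞ = ⟨a, b | a² = b² = 1⟩, with subgroups K = ⟨a, bab⟩ and L = ⟨b, aba⟩, the union K ∪ L contains every element of D∞ represented by a word of odd length in a and b; consequently no generating set of D∞ is contained in D∞ \ (K ∪ L). -/

import Mathlib

open DihedralGroup Subgroup

lemma r_zpow' (k : ℤ) : (r 1 : DihedralGroup 0) ^ k = r (k : ZMod 0) := by
  induction k using Int.induction_on with
  | zero => rw [zpow_zero, one_def]; rfl
  | succ n ih => rw [zpow_add, ih]; exact r_mul_r _ _
  | pred n ih =>
      rw [sub_eq_add_neg, zpow_add, ih]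
      have : ((r 1 : DihedralGroup 0) ^ (-1 : ℤ)) = r (-1) := by
        rw [zpow_neg, zpow_one]
        rfl
      rw [this]; exact r_mul_r _ _

lemma r_mem_even' {H : Subgroup (DihedralGroup 0)} (h2 : (r 2 : DihedralGroup 0) ∈ H)
    (m : ℤ) (hm : Even m) : (r m : DihedralGroup 0) ∈ H := by
  obtain ⟨k, rfl⟩ := hm
  have : (r (k + k) : DihedralGroup 0) = (r 2) ^ k := by
    have : (r 2 : DihedralGroup 0) = (r 1) ^ (2 : ℤ) := by
      rw [r_zpow']; rfl
    rw [this, ← zpow_mul, r_zpow']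
    norm_num
    ring
  rw [this]
  exact zpow_mem h2 k

/-- the subgroup of rotations -/
def rotations : Subgroup (DihedralGroup 0) where
  carrier := {x | ∃ m, x = r m}
  mul_mem' := by rintro _ _ ⟨i, rfl⟩ ⟨j, rfl⟩; exact ⟨i + j, by simp⟩
  one_mem' := ⟨0, one_def⟩
  inv_mem' := by rintro _ ⟨i, rfl⟩; exact ⟨-i, by
    have h1 : (r i : DihedralGroup 0) * r (-i) = 1 := by
      rw [r_mul_r, add_neg_cancel, one_def]
    exact (inv_eq_of_mul_eq_one_right h1).symm⟩

lemma word_shape : ∀ l : List (DihedralGroup 0),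
    (∀ x ∈ l, x = sr 0 ∨ x = sr 1) →
    (Even l.length → ∃ m, l.prod = r m) ∧ (Odd l.length → ∃ m, l.prod = sr m) := by
  intro l
  induction l with
  | nil => intro _; exact ⟨fun _ => ⟨0, one_def⟩, fun h => by simp at h⟩
  | cons x t ih =>
      intro hmem
      obtain ⟨he, ho⟩ := ih (fun y hy => hmem y (List.mem_cons_of_mem x hy))
      have hx : ∃ i, x = sr i := by
        rcases hmem x List.mem_cons_self with h | h <;> exact ⟨_, h⟩
      obtain ⟨i, rfl⟩ := hx
      constructor
      · intro h
        have ht : Odd t.length := by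
          have := Nat.even_add_one.mp (by simpa [List.length_cons] using h)
          exact Nat.not_even_iff_odd.mp this
        obtain ⟨m, hm⟩ := ho ht
        exact ⟨m - i, by rw [List.prod_cons, hm, sr_mul_sr]⟩
      · intro h
        have ht : Even t.length := by
          have h' : Odd (t.length + 1) := by simpa [List.length_cons] using h
          rcases Nat.even_or_odd t.length with h'' | h''
          · exact h''
          · exact absurd (h''.add_one) (Nat.not_even_iff_odd.mpr h')
        obtain ⟨m, hm⟩ := he ht
        exact ⟨i + m, by rw [List.prod_cons, hm, sr_mul_r]⟩

/-- In `D∞ = ⟨a, b | a² = b² = 1⟩` (realized as `DihedralGroup 0` with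
`a = sr 0`, `b = sr 1`), with `K = ⟨a, bab⟩` and `L = ⟨b, aba⟩`, every element
represented by a word of odd length in `a` and `b` lies in `K ∪ L`; consequently
no generating set of `D∞` is disjoint from `K ∪ L`. -/
theorem dihedral_odd_words_in_union :
    ∀ (a b : DihedralGroup 0), a = DihedralGroup.sr 0 → b = DihedralGroup.sr 1 →
    ∀ (K L : Subgroup (DihedralGroup 0)),
      K = Subgroup.closure {a, b * a * b} → L = Subgroup.closure {b, a * b * a} →
      (∀ l : List (DihedralGroup 0), (∀ x ∈ l, x = a ∨ x = b) → Odd l.length →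
        l.prod ∈ K ∨ l.prod ∈ L) ∧
      ¬∃ S : Set (DihedralGroup 0), Subgroup.closure S = ⊤ ∧
        S ∩ ((K : Set (DihedralGroup 0)) ∪ (L : Set (DihedralGroup 0))) = ∅ := by
  rintro a b rfl rfl K L hK hL
  -- basic membership facts
  have hbab : (sr 1 : DihedralGroup 0) * sr 0 * sr 1 = sr 2 := by
    rw [sr_mul_sr, r_mul_sr]; norm_num
  have haba : (sr 0 : DihedralGroup 0) * sr 1 * sr 0 = sr (-1) := by
    rw [sr_mul_sr, r_mul_sr]; norm_num
  have haK : (sr 0 : DihedralGroup 0) ∈ K := by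
    rw [hK]; exact subset_closure (by simp)
  have hbabK : (sr 2 : DihedralGroup 0) ∈ K := by
    rw [hK]; rw [← hbab]; exact subset_closure (by simp)
  have hr2K : (r 2 : DihedralGroup 0) ∈ K := by
    have := mul_mem haK hbabK
    rwa [sr_mul_sr, show (2 : ZMod 0) - 0 = 2 by ring] at this
  have hbL : (sr 1 : DihedralGroup 0) ∈ L := by
    rw [hL]; exact subset_closure (by simp)
  have habaL : (sr (-1) : DihedralGroup 0) ∈ L := by
    rw [hL]; rw [← haba]; exact subset_closure (by simp)
  have hr2L : (r 2 : DihedralGroup 0) ∈ L := by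
    have := mul_mem habaL hbL
    rw [sr_mul_sr, show (1 : ZMod 0) - (-1) = 2 by ring] at this
    exact this
  -- every reflection is in K or L
  have key : ∀ m : ℤ, (sr m : DihedralGroup 0) ∈ K ∨ (sr m : DihedralGroup 0) ∈ L := by
    intro m
    rcases Int.even_or_odd m with hm | hm
    · left
      have : (sr m : DihedralGroup 0) = sr 0 * r m := by
        rw [sr_mul_r (0 : ZMod 0) (m : ZMod 0)]; exact congrArg sr (zero_add m).symm
      rw [this]
      exact mul_mem haK (r_mem_even' hr2K m hm)
    · right
      have hm1 : Even (m - 1) := by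
        obtain ⟨k, rfl⟩ := hm; exact ⟨k, by ring⟩
      have : (sr m : DihedralGroup 0) = sr 1 * r (m - 1) := by
        rw [sr_mul_r]; exact congrArg sr (show m = 1 + (m - 1) by ring)
      rw [this]
      exact mul_mem hbL (r_mem_even' hr2L (m - 1) hm1)
  constructor
  · intro l hl hodd
    obtain ⟨m, hm⟩ := (word_shape l hl).2 hodd
    rw [hm]
    exact key m
  · rintro ⟨S, hStop, hdisj⟩
    have hSR : S ⊆ (rotations : Set (DihedralGroup 0)) := by
      intro x hx
      cases x with
      | r m => exact ⟨m, rfl⟩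
      | sr m =>
          exfalso
          have : sr m ∈ S ∩ ((K : Set (DihedralGroup 0)) ∪ (L : Set (DihedralGroup 0))) := by
            refine ⟨hx, ?_⟩
            rcases key m with h | h
            · exact Or.inl h
            · exact Or.inr h
          rw [hdisj] at this
          exact this
    have : Subgroup.closure S ≤ rotations := (Subgroup.closure_le _).mpr hSR
    rw [hStop] at this
    have h0 : (sr 0 : DihedralGroup 0) ∈ rotations := this trivial
    obtain ⟨m, hm⟩ := h0
    exact absurd hm (by simp)
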